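/- For every φ > 0 and every real n ≥ 0, the function L ↦ M(n,L;φ) is convex on [0,∞). Consequently, for every c > 0 the sublevel set {L ∈ [0,∞) : M(n,L;φ) ≤ c} is a convex subset of ℝ (an interval). -/

import Mathlib

/-- `M(n, L; φ) = φ^φ (φ+L)^{-(φ+n)} (Γ(φ+n)/Γ(φ)) e^L`. -/
noncomputable def M (n L φ : ℝ) : ℝ :=
  φ ^ φ * (φ + L) ^ (-(φ + n)) * (Real.Gamma (φ + n) / Real.Gamma φ) * Real.exp L

lemma g_convex (φ n : ℝ) (hφ : 0 < φ) (hn : 0 ≤ n) :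
    ConvexOn ℝ (Set.Ici (0 : ℝ)) (fun L : ℝ => (φ + n) * (-Real.log (φ + L)) + L) := by
  have hneg : ConvexOn ℝ (Set.Ioi (0 : ℝ)) (fun x : ℝ => -Real.log x) :=
    strictConcaveOn_log_Ioi.concaveOn.neg
  have haff : ConvexOn ℝ ((AffineMap.const ℝ ℝ φ + AffineMap.id ℝ ℝ) ⁻¹' Set.Ioi 0)
      (fun L : ℝ => -Real.log (φ + L)) :=
    hneg.comp_affineMap (AffineMap.const ℝ ℝ φ + AffineMap.id ℝ ℝ)
  have hsub : Set.Ici (0 : ℝ) ⊆ (AffineMap.const ℝ ℝ φ + AffineMap.id ℝ ℝ) ⁻¹' Set.Ioi 0 := by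
    intro x hx
    have hx' : (0 : ℝ) ≤ x := hx
    show (0:ℝ) < (AffineMap.const ℝ ℝ φ + AffineMap.id ℝ ℝ) x
    show (0:ℝ) < φ + x
    linarith
  have h1 : ConvexOn ℝ (Set.Ici (0 : ℝ)) (fun L : ℝ => -Real.log (φ + L)) :=
    haff.subset hsub (convex_Ici 0)
  have h2 := h1.smul (by linarith : (0:ℝ) ≤ φ + n)
  have h3 := h2.add (convexOn_id (convex_Ici (0:ℝ)))
  simpa [smul_eq_mul, Pi.add_def] using h3

lemma exp_g_convex (φ n : ℝ) (hφ : 0 < φ) (hn : 0 ≤ n) :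
    ConvexOn ℝ (Set.Ici (0 : ℝ))
      (fun L : ℝ => Real.exp ((φ + n) * (-Real.log (φ + L)) + L)) := by
  have hg := g_convex φ n hφ hn
  refine ⟨convex_Ici 0, fun x hx y hy a b ha hb hab => ?_⟩
  calc Real.exp ((φ + n) * (-Real.log (φ + (a • x + b • y))) + (a • x + b • y))
      ≤ Real.exp (a • ((φ + n) * (-Real.log (φ + x)) + x)
          + b • ((φ + n) * (-Real.log (φ + y)) + y)) :=
        Real.exp_le_exp.2 (hg.2 hx hy ha hb hab)
    _ ≤ a • Real.exp ((φ + n) * (-Real.log (φ + x)) + x)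
          + b • Real.exp ((φ + n) * (-Real.log (φ + y)) + y) :=
        convexOn_exp.2 trivial trivial ha hb hab

theorem M_convexOn_and_sublevel_convex (φ n : ℝ) (hφ : 0 < φ) (hn : 0 ≤ n) :
    ConvexOn ℝ (Set.Ici (0 : ℝ)) (fun L => M n L φ) ∧
      ∀ c : ℝ, 0 < c → Convex ℝ {L : ℝ | 0 ≤ L ∧ M n L φ ≤ c} := by
  set C : ℝ := φ ^ φ * (Real.Gamma (φ + n) / Real.Gamma φ) with hC
  have hCpos : 0 < C := by
    apply mul_pos (Real.rpow_pos_of_pos hφ _)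
    exact div_pos (Real.Gamma_pos_of_pos (by linarith)) (Real.Gamma_pos_of_pos hφ)
  have hM : ∀ L ∈ Set.Ici (0:ℝ), C * Real.exp ((φ + n) * (-Real.log (φ + L)) + L) =
      M n L φ := by
    intro L hL
    have hpos : 0 < φ + L := by
      have : (0:ℝ) ≤ L := hL
      linarith
    rw [M, Real.rpow_def_of_pos hpos, Real.exp_add]
    ring_nf
    rw [hC]
    ring
  have hconv : ConvexOn ℝ (Set.Ici (0 : ℝ)) (fun L => M n L φ) := by
    have h := (exp_g_convex φ n hφ hn).smul hCpos.le
    exact (h.congr (fun L hL => by simpa [smul_eq_mul] using hM L hL))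
  refine ⟨hconv, fun c hc => ?_⟩
  have h := hconv.convex_le c
  have heq : {L : ℝ | 0 ≤ L ∧ M n L φ ≤ c} = {x ∈ Set.Ici (0:ℝ) | M n x φ ≤ c} := rfl
  rw [heq]
  exact h
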